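/- Let n ≥ 1 and let U be an invertible n × n matrix over the field 𝔽₂ = ZMod 2, with F := U⁻¹. Define U(i) := {k : U_{k,i} = 1}, F(i) := {k : F_{i,k} = 1}, P(i) := F(0) △ F(1) △ ⋯ △ F(i−1), and R(i) := P(i) △ F(i). Let m_U be the 2^n × 2^n permutation matrix indexed by vectors f ∈ 𝔽₂ⁿ with m_U e_f = e_{U f}, and let Γ_{2i}, Γ_{2i+1} be the n-qubit Jordan–Wigner Majorana operators Γ_{2i} := Z^{⊗i} ⊗ X ⊗ I^{⊗(n−1−i)}, Γ_{2i+1} := Z^{⊗i} ⊗ Y ⊗ I^{⊗(n−1−i)}. Then for each i ∈ {0,…,n−1} there exist fourth roots of unity λ_i, μ_i ∈ {1,−1,i,−i} such that m_U Γ_{2i} m_U† = λ_i · X_{U(i)} Z_{P(i)} and m_U Γ_{2i+1} m_U† = μ_i · X_{U(i)} Z_{R(i)}. -/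

import Mathlib

open Matrix Finset
open scoped symmDiff

namespace FQ

/-- Pauli X. -/
noncomputable def X : Matrix (ZMod 2) (ZMod 2) ℂ := !![0, 1; 1, 0]

/-- Pauli Y. -/
noncomputable def Y : Matrix (ZMod 2) (ZMod 2) ℂ := !![0, -Complex.I; Complex.I, 0]

/-- Pauli Z. -/
noncomputable def Z : Matrix (ZMod 2) (ZMod 2) ℂ := !![1, 0; 0, -1]

/-- Tensor product `M 0 ⊗ M 1 ⊗ ⋯ ⊗ M (n-1)` of a family of single-qubit operators, as a
`2^n × 2^n` matrix indexed by functions `Fin n → ZMod 2`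
(the identification of `(ℂ²)^⊗n` with `ℂ^(2^n)`). -/
noncomputable def tens {n : ℕ} (M : Fin n → Matrix (ZMod 2) (ZMod 2) ℂ) :
    Matrix (Fin n → ZMod 2) (Fin n → ZMod 2) ℂ :=
  Matrix.of fun f g => ∏ i, M i (f i) (g i)

/-- The `n`-qubit Jordan–Wigner Majorana operators:
`gamma n (2i) = Z^⊗i ⊗ X ⊗ I^⊗(n-1-i)` and `gamma n (2i+1) = Z^⊗i ⊗ Y ⊗ I^⊗(n-1-i)`. -/
noncomputable def gamma (n k : ℕ) : Matrix (Fin n → ZMod 2) (Fin n → ZMod 2) ℂ :=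
  tens fun j => if (j : ℕ) < k / 2 then Z
    else if (j : ℕ) = k / 2 then (if k % 2 = 0 then X else Y) else 1

/-- The Pauli string `X_S`: Pauli `X` on each tensor factor in `S`, identity elsewhere. -/
noncomputable def Xstr {n : ℕ} (S : Finset (Fin n)) :
    Matrix (Fin n → ZMod 2) (Fin n → ZMod 2) ℂ :=
  tens fun j => if j ∈ S then X else 1

/-- The Pauli string `Y_S`: Pauli `Y` on each tensor factor in `S`, identity elsewhere. -/
noncomputable def Ystr {n : ℕ} (S : Finset (Fin n)) :
    Matrix (Fin n → ZMod 2) (Fin n → ZMod 2) ℂ :=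
  tens fun j => if j ∈ S then Y else 1

/-- The Pauli string `Z_S`: Pauli `Z` on each tensor factor in `S`, identity elsewhere. -/
noncomputable def Zstr {n : ℕ} (S : Finset (Fin n)) :
    Matrix (Fin n → ZMod 2) (Fin n → ZMod 2) ℂ :=
  tens fun j => if j ∈ S then Z else 1

/-- The `2^n × 2^n` permutation matrix `m_U` of the linear encoding determined by
`U ∈ GL_n(𝔽₂)`, sending the basis vector `e_f` to `e_{U f}`. -/
noncomputable def encMat {n : ℕ} (U : Matrix (Fin n) (Fin n) (ZMod 2)) :
    Matrix (Fin n → ZMod 2) (Fin n → ZMod 2) ℂ :=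
  Matrix.of fun g f => if g = U.mulVec f then 1 else 0

/-- `U(i) = {k : U_{k,i} = 1}`, the set of row indices of nonzero elements of the `i`-th
column of `U`. -/
def colSet {n : ℕ} (U : Matrix (Fin n) (Fin n) (ZMod 2)) (i : Fin n) : Finset (Fin n) :=
  Finset.univ.filter fun k => U k i = 1

/-- `F(i) = {k : F_{i,k} = 1}`, the set of column indices of nonzero elements of the `i`-th
row of `F`. -/
def rowSet {n : ℕ} (F : Matrix (Fin n) (Fin n) (ZMod 2)) (i : Fin n) : Finset (Fin n) :=
  Finset.univ.filter fun k => F i k = 1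

/-- `rowSet` with a natural-number index (junk value `∅` out of range). -/
def rowSetN {n : ℕ} (F : Matrix (Fin n) (Fin n) (ZMod 2)) (i : ℕ) : Finset (Fin n) :=
  if h : i < n then rowSet F ⟨i, h⟩ else ∅

/-- `P(i) = F(0) △ F(1) △ ⋯ △ F(i−1)`, the iterated symmetric difference of the rows of `F`. -/
def Pset {n : ℕ} (F : Matrix (Fin n) (Fin n) (ZMod 2)) : ℕ → Finset (Fin n)
  | 0 => ∅
  | i + 1 => Pset F i ∆ rowSetN F i

/-- `R(i) = P(i) △ F(i)`. -/
def Rset {n : ℕ} (F : Matrix (Fin n) (Fin n) (ZMod 2)) (i : ℕ) : Finset (Fin n) :=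
  Pset F i ∆ rowSetN F i

/-! ### auxiliary lemmas -/

noncomputable def χ (a : ZMod 2) : ℂ := (-1) ^ a.val

lemma zmod2_cases : ∀ a : ZMod 2, a = 0 ∨ a = 1 := by decide
lemma two0 : (1 + 1 : ZMod 2) = 0 := by decide
lemma two0' : (2 : ZMod 2) = 0 := by decide
lemma val1 : ZMod.val (1 : ZMod 2) = 1 := rfl
lemma val0 : ZMod.val (0 : ZMod 2) = 0 := rfl

lemma χ_zero : χ 0 = 1 := by simp [χ]

lemma χ_add (a b : ZMod 2) : χ (a + b) = χ a * χ b := by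
  rcases zmod2_cases a with h | h <;> rcases zmod2_cases b with h' | h' <;>
    subst h <;> subst h' <;> simp [χ, two0, two0', val1, val0]

lemma X_apply (a b : ZMod 2) : X a b = if a = b + 1 then 1 else 0 := by
  rcases zmod2_cases a with h | h <;> rcases zmod2_cases b with h' | h' <;>
    subst h <;> subst h' <;> simp [X, two0, two0', val1, val0] <;> rfl

lemma Z_apply (a b : ZMod 2) : Z a b = if a = b then χ b else 0 := by
  rcases zmod2_cases a with h | h <;> rcases zmod2_cases b with h' | h' <;>
    subst h <;> subst h' <;> simp [Z, χ, two0, two0', val1, val0] <;> rfl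

lemma Y_apply (a b : ZMod 2) : Y a b = if a = b + 1 then Complex.I * χ b else 0 := by
  rcases zmod2_cases a with h | h <;> rcases zmod2_cases b with h' | h' <;>
    subst h <;> subst h' <;> simp [Y, χ, two0, two0', val1, val0] <;> rfl

lemma χ_mul (a b : ZMod 2) : χ (a * b) = if a = 1 then χ b else 1 := by
  rcases zmod2_cases a with h | h <;> subst h <;> simp [χ_zero]

lemma χ_sum {α : Type*} (s : Finset α) (v : α → ZMod 2) :
    χ (∑ x ∈ s, v x) = ∏ x ∈ s, χ (v x) := by
  induction s using Finset.cons_induction with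
  | empty => simp [χ_zero]
  | cons a s ha ih => rw [Finset.sum_cons, Finset.prod_cons, χ_add, ih]

lemma prod_delta {n : ℕ} (f g d : Fin n → ZMod 2) (c : Fin n → ℂ) :
    (∏ j, if f j = g j + d j then c j else 0) =
      if f = g + d then ∏ j, c j else 0 := by
  by_cases h : f = g + d
  · rw [if_pos h]
    refine Finset.prod_congr rfl fun j _ => ?_
    rw [if_pos]
    exact congrFun h j
  · rw [if_neg h]
    obtain ⟨j, hj⟩ : ∃ j, f j ≠ g j + d j := by
      by_contra hc
      push_neg at hc
      exact h (funext fun j => hc j)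
    exact Finset.prod_eq_zero (Finset.mem_univ j) (if_neg hj)

lemma prod_delta0 {n : ℕ} (f g : Fin n → ZMod 2) (c : Fin n → ℂ) :
    (∏ j, if f j = g j then c j else 0) = if f = g then ∏ j, c j else 0 := by
  by_cases h : f = g
  · rw [if_pos h]
    exact Finset.prod_congr rfl fun j _ => if_pos (congrFun h j)
  · rw [if_neg h]
    obtain ⟨j, hj⟩ : ∃ j, f j ≠ g j := by
      by_contra hc
      push_neg at hc
      exact h (funext fun j => hc j)
    exact Finset.prod_eq_zero (Finset.mem_univ j) (if_neg hj)

/-- entry of `Xstr` -/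
lemma Xstr_apply {n : ℕ} (S : Finset (Fin n)) (f g : Fin n → ZMod 2) :
    Xstr S f g = if f = g + (fun j => if j ∈ S then 1 else 0) then 1 else 0 := by
  unfold Xstr tens
  rw [Matrix.of_apply]
  have h : ∀ j, (if j ∈ S then X else 1) (f j) (g j)
      = if f j = g j + (if j ∈ S then 1 else 0) then (1 : ℂ) else 0 := by
    intro j
    by_cases hj : j ∈ S
    · simp only [hj, if_true, X_apply]
    · simp only [hj, if_false, Matrix.one_apply, add_zero]
  simp only [h]
  rw [prod_delta f g _ (fun _ => 1)]
  simp

/-- entry of `Zstr` -/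
lemma Zstr_apply {n : ℕ} (T : Finset (Fin n)) (f g : Fin n → ZMod 2) :
    Zstr T f g = if f = g then ∏ k ∈ T, χ (g k) else 0 := by
  unfold Zstr tens
  rw [Matrix.of_apply]
  have h : ∀ j, (if j ∈ T then Z else 1) (f j) (g j)
      = if f j = g j then (if j ∈ T then χ (g j) else 1) else 0 := by
    intro j
    by_cases hj : j ∈ T
    · simp only [hj, if_true, Z_apply]
    · simp only [hj, if_false, Matrix.one_apply]
  simp only [h]
  rw [prod_delta0 f g (fun j => if j ∈ T then χ (g j) else 1)]
  rw [← Finset.prod_filter, Finset.filter_mem_eq_inter, Finset.univ_inter]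

/-- entry of `Xstr * Zstr` -/
lemma XZ_apply {n : ℕ} (S T : Finset (Fin n)) (f g : Fin n → ZMod 2) :
    (Xstr S * Zstr T) f g =
      if f = g + (fun j => if j ∈ S then 1 else 0) then ∏ k ∈ T, χ (g k) else 0 := by
  rw [Matrix.mul_apply]
  simp only [Xstr_apply, Zstr_apply]
  have h : ∀ x : Fin n → ZMod 2,
      (if f = x + (fun j => if j ∈ S then (1 : ZMod 2) else 0) then (1 : ℂ) else 0) *
        (if x = g then ∏ k ∈ T, χ (g k) else 0)
      = if x = g then
          (if f = g + (fun j => if j ∈ S then (1 : ZMod 2) else 0) then ∏ k ∈ T, χ (g k) else 0)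
        else 0 := by
    intro x
    by_cases hx : x = g
    · subst hx
      by_cases hf : f = x + fun j => if j ∈ S then (1 : ZMod 2) else 0 <;> simp [hf]
    · simp [hx]
  simp only [h]
  rw [Finset.sum_ite_eq' Finset.univ g]
  simp

/-- entry of even gamma -/
lemma gamma_even_apply {n : ℕ} (i : Fin n) (f g : Fin n → ZMod 2) :
    gamma n (2 * (i : ℕ)) f g =
      if f = g + Pi.single i 1 then
        ∏ j ∈ Finset.univ.filter (fun j : Fin n => (j : ℕ) < (i : ℕ)), χ (g j)
      else 0 := by
  unfold gamma tens
  rw [Matrix.of_apply]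
  have hdiv : 2 * (i : ℕ) / 2 = (i : ℕ) := by omega
  have hmod : 2 * (i : ℕ) % 2 = 0 := by omega
  have h : ∀ j : Fin n,
      (if (j : ℕ) < 2 * (i : ℕ) / 2 then Z
        else if (j : ℕ) = 2 * (i : ℕ) / 2 then (if 2 * (i : ℕ) % 2 = 0 then X else Y) else 1)
        (f j) (g j)
      = if f j = g j + (Pi.single i 1 : Fin n → ZMod 2) j then
          (if (j : ℕ) < (i : ℕ) then χ (g j) else 1) else 0 := by
    intro j
    rw [hdiv, hmod]
    rcases lt_trichotomy (j : ℕ) (i : ℕ) with hj | hj | hj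
    · have hne : j ≠ i := by intro he; omega
      simp only [hj, if_true, Z_apply, Pi.single_apply, hne, if_false, add_zero]
    · have he : j = i := Fin.ext hj
      subst he
      simp only [lt_irrefl, if_false, hj, if_true, if_pos rfl, X_apply, Pi.single_apply]
    · have hne : j ≠ i := by intro he; omega
      have h1 : ¬ ((j : ℕ) < (i : ℕ)) := by omega
      have h2 : ¬ ((j : ℕ) = (i : ℕ)) := by omega
      simp only [h1, h2, if_false, Matrix.one_apply, Pi.single_apply, hne, add_zero]
  simp only [h]
  rw [prod_delta f g (Pi.single i 1) (fun j => if (j : ℕ) < (i : ℕ) then χ (g j) else 1)]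
  rw [← Finset.prod_filter]

/-- entry of odd gamma -/
lemma gamma_odd_apply {n : ℕ} (i : Fin n) (f g : Fin n → ZMod 2) :
    gamma n (2 * (i : ℕ) + 1) f g =
      if f = g + Pi.single i 1 then
        Complex.I * ∏ j ∈ Finset.univ.filter (fun j : Fin n => (j : ℕ) < (i : ℕ) + 1), χ (g j)
      else 0 := by
  unfold gamma tens
  rw [Matrix.of_apply]
  have hdiv : (2 * (i : ℕ) + 1) / 2 = (i : ℕ) := by omega
  have hmod : (2 * (i : ℕ) + 1) % 2 = 1 := by omega
  have h : ∀ j : Fin n,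
      (if (j : ℕ) < (2 * (i : ℕ) + 1) / 2 then Z
        else if (j : ℕ) = (2 * (i : ℕ) + 1) / 2 then
          (if (2 * (i : ℕ) + 1) % 2 = 0 then X else Y) else 1)
        (f j) (g j)
      = if f j = g j + (Pi.single i 1 : Fin n → ZMod 2) j then
          ((if (j : ℕ) = (i : ℕ) then Complex.I else 1) *
            (if (j : ℕ) < (i : ℕ) + 1 then χ (g j) else 1)) else 0 := by
    intro j
    rw [hdiv, hmod]
    rcases lt_trichotomy (j : ℕ) (i : ℕ) with hj | hj | hj
    · have hne : j ≠ i := by intro he; omega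
      have h2 : ¬ ((j : ℕ) = (i : ℕ)) := by omega
      have h3 : (j : ℕ) < (i : ℕ) + 1 := by omega
      simp only [hj, if_true, Z_apply, Pi.single_apply, hne, h2, h3, if_false, add_zero, one_mul]
    · have he : j = i := Fin.ext hj
      subst he
      simp only [lt_irrefl, if_false, hj, if_true, Y_apply, Pi.single_apply,
        Nat.lt_succ_iff, le_refl, one_ne_zero]
    · have hne : j ≠ i := by intro he; omega
      have h1 : ¬ ((j : ℕ) < (i : ℕ)) := by omega
      have h2 : ¬ ((j : ℕ) = (i : ℕ)) := by omega
      have h3 : ¬ ((j : ℕ) < (i : ℕ) + 1) := by omega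
      simp only [h1, h2, h3, if_false, Matrix.one_apply, Pi.single_apply, hne, add_zero, one_mul]
  simp only [h]
  rw [prod_delta f g (Pi.single i 1)]
  rw [Finset.prod_mul_distrib]
  congr 1
  rw [← Finset.prod_filter, ← Finset.prod_filter]
  congr 1
  have h1 : Finset.univ.filter (fun j : Fin n => (j : ℕ) = (i : ℕ)) = {i} := by
    ext j
    simp [Fin.ext_iff]
  rw [h1, Finset.prod_singleton]

/-- conjugation by `encMat` -/
lemma conj_apply {n : ℕ} (U : Matrix (Fin n) (Fin n) (ZMod 2)) (hU : IsUnit U)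
    (A : Matrix (Fin n → ZMod 2) (Fin n → ZMod 2) ℂ) (f g : Fin n → ZMod 2) :
    (encMat U * A * (encMat U)ᴴ) f g = A (U⁻¹.mulVec f) (U⁻¹.mulVec g) := by
  have hdet : IsUnit U.det := (Matrix.isUnit_iff_isUnit_det U).mp hU
  have hUF : U * U⁻¹ = 1 := Matrix.mul_nonsing_inv U hdet
  have hFU : U⁻¹ * U = 1 := Matrix.nonsing_inv_mul U hdet
  have key : ∀ (a b : Fin n → ZMod 2), b = U.mulVec a ↔ a = U⁻¹.mulVec b := by
    intro a b
    constructor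
    · rintro rfl
      rw [Matrix.mulVec_mulVec, hFU, Matrix.one_mulVec]
    · rintro rfl
      rw [Matrix.mulVec_mulVec, hUF, Matrix.one_mulVec]
  rw [Matrix.mul_apply]
  have hcol : ∀ b, (encMat U * A) f b = A (U⁻¹.mulVec f) b := by
    intro b
    rw [Matrix.mul_apply]
    simp only [encMat, Matrix.of_apply, key]
    simp only [ite_mul, one_mul, zero_mul]
    rw [Finset.sum_ite_eq' Finset.univ (U⁻¹.mulVec f) (fun a => A a b)]
    simp
  simp only [hcol]
  simp only [Matrix.conjTranspose_apply, encMat, Matrix.of_apply, key]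
  simp only [apply_ite star, star_one, star_zero, mul_ite, mul_one, mul_zero]
  rw [Finset.sum_ite_eq' Finset.univ (U⁻¹.mulVec g) (fun b => A (U⁻¹.mulVec f) b)]
  simp

/-- parity vector of `Pset` -/
def pvec {n : ℕ} (F : Matrix (Fin n) (Fin n) (ZMod 2)) : ℕ → Fin n → ZMod 2
  | 0 => 0
  | m + 1 => pvec F m + (fun k => if h : m < n then F ⟨m, h⟩ k else 0)

lemma zmod2_xor : ∀ a b : ZMod 2,
    ((a = 1 ∧ ¬ b = 1) ∨ (b = 1 ∧ ¬ a = 1)) ↔ a + b = 1 := by decide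

lemma mem_Pset_iff {n : ℕ} (F : Matrix (Fin n) (Fin n) (ZMod 2)) (m : ℕ) (k : Fin n) :
    k ∈ Pset F m ↔ pvec F m k = 1 := by
  induction m with
  | zero =>
      simp only [Pset, Finset.notMem_empty, pvec, Pi.zero_apply, false_iff]
      decide
  | succ m ih =>
      rw [Pset, Finset.mem_symmDiff, ih]
      have hr : (k ∈ rowSetN F m) ↔ (if h : m < n then F ⟨m, h⟩ k else 0) = 1 := by
        unfold rowSetN rowSet
        split
        · simp
        · simp only [Finset.notMem_empty, false_iff]
          decide
      rw [hr]
      show _ ↔ (pvec F m + fun k => if h : m < n then F ⟨m, h⟩ k else 0) k = 1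
      rw [Pi.add_apply]
      exact zmod2_xor _ _

lemma phase_eq {n : ℕ} (F : Matrix (Fin n) (Fin n) (ZMod 2)) (g : Fin n → ZMod 2) :
    ∀ m, m ≤ n →
      (∏ j ∈ Finset.univ.filter (fun j : Fin n => (j : ℕ) < m), χ (F.mulVec g j)) =
        ∏ k, χ (pvec F m k * g k) := by
  intro m
  induction m with
  | zero =>
      intro _
      have : Finset.univ.filter (fun j : Fin n => (j : ℕ) < 0) = ∅ := by
        ext j; simp
      rw [this]
      simp [pvec, χ_zero]
  | succ m ih =>
      intro hm
      have hm' : m < n := hm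
      have hset : Finset.univ.filter (fun j : Fin n => (j : ℕ) < m + 1)
          = insert ⟨m, hm'⟩ (Finset.univ.filter fun j : Fin n => (j : ℕ) < m) := by
        ext j
        simp only [Finset.mem_filter, Finset.mem_insert, Finset.mem_univ, true_and, Fin.ext_iff]
        omega
      rw [hset, Finset.prod_insert (by simp)]
      rw [ih (le_of_lt hm')]
      have hp : ∀ k, pvec F (m + 1) k = pvec F m k + F ⟨m, hm'⟩ k := by
        intro k
        show (pvec F m + fun k => if h : m < n then F ⟨m, h⟩ k else 0) k = _
        rw [Pi.add_apply]
        simp [hm']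
      have : ∀ k, χ (pvec F (m + 1) k * g k)
          = χ (F ⟨m, hm'⟩ k * g k) * χ (pvec F m k * g k) := by
        intro k
        rw [hp, add_mul, χ_add, mul_comm]
      simp only [this]
      rw [Finset.prod_mul_distrib]
      congr 1
      rw [← χ_sum]
      rfl

lemma pvec_prod_eq_Pset {n : ℕ} (F : Matrix (Fin n) (Fin n) (ZMod 2)) (g : Fin n → ZMod 2)
    (m : ℕ) :
    (∏ k, χ (pvec F m k * g k)) = ∏ k ∈ Pset F m, χ (g k) := by
  have h : ∀ k : Fin n, χ (pvec F m k * g k) = if k ∈ Pset F m then χ (g k) else 1 := by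
    intro k
    rw [χ_mul]
    simp only [mem_Pset_iff]
  simp only [h]
  rw [← Finset.prod_filter, Finset.filter_mem_eq_inter, Finset.univ_inter]

lemma phase_Pset {n : ℕ} (F : Matrix (Fin n) (Fin n) (ZMod 2)) (g : Fin n → ZMod 2)
    (m : ℕ) (hm : m ≤ n) :
    (∏ j ∈ Finset.univ.filter (fun j : Fin n => (j : ℕ) < m), χ (F.mulVec g j)) =
      ∏ k ∈ Pset F m, χ (g k) := by
  rw [phase_eq F g m hm, pvec_prod_eq_Pset]

/-- conjugating the Jordan–Wigner Majorana operators by the permutation matrix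
`m_U` of a linear encoding `U ∈ GL_n(𝔽₂)` yields, up to fourth roots of unity, the Pauli
strings `X_{U(i)} Z_{P(i)}` and `X_{U(i)} Z_{R(i)}`, where `F = U⁻¹`,
`P(i) = F(0) △ ⋯ △ F(i−1)` and `R(i) = P(i) △ F(i)`. -/
theorem linear_encoding_majorana_representation (n : ℕ) (hn : 1 ≤ n)
    (U : Matrix (Fin n) (Fin n) (ZMod 2)) (hU : IsUnit U) :
    ∀ i : Fin n, ∃ lam mu : ℂ,
      lam ∈ ({1, -1, Complex.I, -Complex.I} : Set ℂ) ∧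
      mu ∈ ({1, -1, Complex.I, -Complex.I} : Set ℂ) ∧
      encMat U * gamma n (2 * (i : ℕ)) * (encMat U)ᴴ =
        lam • (Xstr (colSet U i) * Zstr (Pset U⁻¹ (i : ℕ))) ∧
      encMat U * gamma n (2 * (i : ℕ) + 1) * (encMat U)ᴴ =
        mu • (Xstr (colSet U i) * Zstr (Rset U⁻¹ (i : ℕ))) := by
  intro i
  have hdet : IsUnit U.det := (Matrix.isUnit_iff_isUnit_det U).mp hU
  have hUF : U * U⁻¹ = 1 := Matrix.mul_nonsing_inv U hdet
  have hFU : U⁻¹ * U = 1 := Matrix.nonsing_inv_mul U hdet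
  have hinj : Function.Injective (fun x : Fin n → ZMod 2 => U⁻¹.mulVec x) := by
    intro x y hxy
    have h2 := congrArg U.mulVec hxy
    simpa [Matrix.mulVec_mulVec, hUF, Matrix.one_mulVec] using h2
  have hcolfun : (fun j => if j ∈ colSet U i then (1 : ZMod 2) else 0)
      = U.mulVec (Pi.single i 1) := by
    funext k
    simp only [Matrix.mulVec_single, mul_one]
    simp only [colSet, Finset.mem_filter, Finset.mem_univ, true_and]
    rcases zmod2_cases (U k i) with h | h <;> simp [h]
  have hdS : ∀ g : Fin n → ZMod 2,
      U⁻¹.mulVec (g + fun j => if j ∈ colSet U i then (1 : ZMod 2) else 0)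
        = U⁻¹.mulVec g + Pi.single i 1 := by
    intro g
    rw [Matrix.mulVec_add, hcolfun, Matrix.mulVec_mulVec, hFU, Matrix.one_mulVec]
  have hcond : ∀ f g : Fin n → ZMod 2,
      (U⁻¹.mulVec f = U⁻¹.mulVec g + Pi.single i 1)
        ↔ (f = g + fun j => if j ∈ colSet U i then (1 : ZMod 2) else 0) := by
    intro f g
    rw [← hdS g]
    exact ⟨fun h => hinj h, fun h => congrArg _ h⟩
  refine ⟨1, Complex.I, by simp, by simp, ?_, ?_⟩
  · ext f g
    rw [conj_apply U hU, gamma_even_apply i (U⁻¹.mulVec f) (U⁻¹.mulVec g),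
      Matrix.smul_apply, XZ_apply, one_smul]
    exact if_congr (hcond f g) (phase_Pset U⁻¹ g (i : ℕ) (le_of_lt i.isLt)) rfl
  · ext f g
    rw [conj_apply U hU, gamma_odd_apply i (U⁻¹.mulVec f) (U⁻¹.mulVec g),
      Matrix.smul_apply, XZ_apply, smul_eq_mul, mul_ite, mul_zero]
    have hR : Rset U⁻¹ (i : ℕ) = Pset U⁻¹ ((i : ℕ) + 1) := rfl
    rw [hR]
    exact if_congr (hcond f g)
      (congrArg (fun z => Complex.I * z) (phase_Pset U⁻¹ g ((i : ℕ) + 1) i.isLt)) rfl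


end FQ
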